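/- arXiv:1011.4154 — 3 statements merged into one kernel-verified Lean document; each statement's English description precedes it below -/
import Mathlib

section
/- With notation as in the context, V is a partial isometry in M_h(A), i.e. V V* V = V. -/
/-- The range map extended to `E¹ ⊕ E⁰` via the convention `r v = v` for vertices. -/
def rext {V E : Type*} (r : E → V) : E ⊕ V → V := Sum.elim r id

/-- The index set `S↑(x)`. -/
def SUp {V E : Type*} (s : E → V) (x : V → ℤ) : Set ((E ⊕ V) × ℤ) :=
  {q | match q.1 with
       | Sum.inl e => 1 ≤ q.2 ∧ q.2 ≤ -x (s e)
       | Sum.inr v => 1 ≤ q.2 ∧ q.2 ≤ x v}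

/-- The index set `S↓(x)`. -/
def SDn {V E : Type*} (s : E → V) (x : V → ℤ) : Set ((E ⊕ V) × ℤ) :=
  {q | match q.1 with
       | Sum.inl e => 1 ≤ q.2 ∧ q.2 ≤ x (s e)
       | Sum.inr v => 1 ≤ q.2 ∧ q.2 ≤ -x v}

/-- The element `V` of `M_h(A)` associated to a family `{p_v, s_e}` and `x`:
`V = ∑_{w, 1≤i≤x_w, s(e)=w} s_e·E_{m↑(w,i),m↓(e,i)} + ∑_{w, 1≤i≤-x_w, s(e)=w} s_e*·E_{m↑(e,i),m↓(w,i)}`,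
where the first sum is indexed by the pairs `(e,i) ∈ S↓(x)` with `e ∈ E¹` (and `w = s(e)`),
and the second by the pairs `(e,i) ∈ S↑(x)` with `e ∈ E¹` (and `w = s(e)`). -/
noncomputable def Vmat {V E A : Type*} [AddCommMonoid A] [Star A]
    (s : E → V) (x : V → ℤ) (S : E → A) {h : ℕ}
    [Fintype (SUp s x)] [Fintype (SDn s x)]
    (mup : SUp s x ≃ Fin h) (mdn : SDn s x ≃ Fin h) : Matrix (Fin h) (Fin h) A :=
  (∑ q : SDn s x, match q with
    | ⟨(Sum.inl e, i), hq⟩ =>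
        Matrix.single (mup ⟨(Sum.inr (s e), i), hq⟩) (mdn ⟨(Sum.inl e, i), hq⟩) (S e)
    | ⟨(Sum.inr _, _), _⟩ => 0)
  + (∑ q : SUp s x, match q with
    | ⟨(Sum.inl e, i), hq⟩ =>
        Matrix.single (mup ⟨(Sum.inl e, i), hq⟩) (mdn ⟨(Sum.inr (s e), i), hq⟩) (star (S e))
    | ⟨(Sum.inr _, _), _⟩ => 0)

/-- The element `P` of `M_h(A)`:
`P = ∑_{w, 1≤i≤x_w} p_w·E_{m↑(w,i),m↑(w,i)} + ∑_{w, 1≤i≤-x_w, s(e)=w} p_{r(e)}·E_{m↑(e,i),m↑(e,i)}`,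
written as a single sum over `S↑(x)` using the convention `r v = v`. -/
noncomputable def Pmat {V E A : Type*} [AddCommMonoid A]
    (r s : E → V) (x : V → ℤ) (p : V → A) {h : ℕ}
    [Fintype (SUp s x)]
    (mup : SUp s x ≃ Fin h) : Matrix (Fin h) (Fin h) A :=
  ∑ q : SUp s x, Matrix.single (mup q) (mup q) (p (rext r q.1.1))

/-- The `S↓`-indexed summand of `Vmat`. -/
noncomputable def Fq {V E A : Type*} [AddCommMonoid A] [Star A]
    (s : E → V) (x : V → ℤ) (S : E → A) {h : ℕ}
    [Fintype (SUp s x)] [Fintype (SDn s x)]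
    (mup : SUp s x ≃ Fin h) (mdn : SDn s x ≃ Fin h) : ↥(SDn s x) → Matrix (Fin h) (Fin h) A
  | ⟨(Sum.inl e, i), hq⟩ =>
      Matrix.single (mup ⟨(Sum.inr (s e), i), hq⟩) (mdn ⟨(Sum.inl e, i), hq⟩) (S e)
  | ⟨(Sum.inr _, _), _⟩ => 0

/-- The `S↑`-indexed summand of `Vmat`. -/
noncomputable def Gq {V E A : Type*} [AddCommMonoid A] [Star A]
    (s : E → V) (x : V → ℤ) (S : E → A) {h : ℕ}
    [Fintype (SUp s x)] [Fintype (SDn s x)]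
    (mup : SUp s x ≃ Fin h) (mdn : SDn s x ≃ Fin h) : ↥(SUp s x) → Matrix (Fin h) (Fin h) A
  | ⟨(Sum.inl e, i), hq⟩ =>
      Matrix.single (mup ⟨(Sum.inl e, i), hq⟩) (mdn ⟨(Sum.inr (s e), i), hq⟩) (star (S e))
  | ⟨(Sum.inr _, _), _⟩ => 0

/-- The `S↓`-indexed diagonal part of `V* V`. -/
noncomputable def D1 {V E A : Type*} [AddCommMonoid A]
    (r s : E → V) (x : V → ℤ) (p : V → A) {h : ℕ}
    [Fintype (SDn s x)]
    (mdn : SDn s x ≃ Fin h) : ↥(SDn s x) → Matrix (Fin h) (Fin h) A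
  | ⟨(Sum.inl e, i), hq⟩ =>
      Matrix.single (mdn ⟨(Sum.inl e, i), hq⟩) (mdn ⟨(Sum.inl e, i), hq⟩) (p (r e))
  | ⟨(Sum.inr _, _), _⟩ => 0

/-- The `S↑`-indexed diagonal part of `V* V`. -/
noncomputable def D2 {V E A : Type*} [AddCommMonoid A] [Mul A] [Star A]
    (s : E → V) (x : V → ℤ) (S : E → A) {h : ℕ}
    [Fintype (SUp s x)] [Fintype (SDn s x)]
    (mdn : SDn s x ≃ Fin h) : ↥(SUp s x) → Matrix (Fin h) (Fin h) A
  | ⟨(Sum.inl e, i), hq⟩ =>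
      Matrix.single (mdn ⟨(Sum.inr (s e), i), hq⟩) (mdn ⟨(Sum.inr (s e), i), hq⟩)
        (S e * star (S e))
  | ⟨(Sum.inr _, _), _⟩ => 0

lemma star_stdBasisMatrix {A : Type*} {n : Type*} [DecidableEq n]
    [AddMonoid A] [StarAddMonoid A] (i j : n) (a : A) :
    star (Matrix.single i j a) = Matrix.single j i (star a) := by
  ext b c
  simp only [Matrix.star_apply, Matrix.single, Matrix.of_apply, and_comm]
  split <;> simp

lemma key_pi {A : Type*} [NonUnitalCStarAlgebra A] {a P : A}
    (h1 : star a * a = P) (h2 : star P = P) (h3 : P * P = P) : a * P = a := by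
  have z : star a * (a * P - a) = 0 := by
    rw [mul_sub, ← mul_assoc, h1, h3, sub_self]
  have h0 : star (a * P - a) * (a * P - a) = 0 := by
    rw [star_sub, star_mul, h2, sub_mul, mul_assoc, z, mul_zero, sub_zero]
  exact sub_eq_zero.mp ((CStarRing.star_mul_self_eq_zero_iff _).mp h0)

theorem stmt9 {V E A : Type*} [Countable V] [Countable E] [NonUnitalCStarAlgebra A]
    (r s : E → V) (p : V → A) (S : E → A)
    (hp_star : ∀ v, star (p v) = p v)
    (hp_idem : ∀ v, p v * p v = p v)
    (hp_orth : ∀ v w, v ≠ w → p v * p w = 0)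
    (hCK1 : ∀ e, star (S e) * S e = p (r e))
    (hS_orth : ∀ e f, e ≠ f → star (S e) * S f = 0)
    (hCK3 : ∀ e, p (s e) * S e = S e)
    (x : V → ℤ) (hsupp : {v | x v ≠ 0}.Finite)
    (hemit : ∀ v, x v ≠ 0 → {e | s e = v}.Finite)
    (hker : ∀ v, ∑ᶠ e ∈ {e | r e = v}, x (s e) = x v)
    {h : ℕ} [Fintype (SUp s x)] [Fintype (SDn s x)]
    (mup : SUp s x ≃ Fin h) (mdn : SDn s x ≃ Fin h)
    (hcomp : ∀ (q : SUp s x) (q' : SDn s x), mup q = mdn q' → rext r q.1.1 = rext r q'.1.1) :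
    Vmat s x S mup mdn * star (Vmat s x S mup mdn) * Vmat s x S mup mdn =
      Vmat s x S mup mdn := by
  have hVeq : Vmat s x S mup mdn
      = (∑ q, Fq s x S mup mdn q) + ∑ q, Gq s x S mup mdn q := rfl
  have hSp : ∀ e, S e * p (r e) = S e := fun e => key_pi (hCK1 e) (hp_star _) (hp_idem _)
  have hpS : ∀ e, p (r e) * star (S e) = star (S e) := by
    intro e
    have := congrArg star (hSp e)
    rwa [star_mul, hp_star] at this
  -- the four pieces of star V * V
  have c1 : ∀ q : SDn s x, ∑ q' : SDn s x,
      star (Fq s x S mup mdn q) * Fq s x S mup mdn q' = D1 r s x p mdn q := by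
    rintro ⟨⟨e | w, i⟩, hq⟩
    · rw [Finset.sum_eq_single (⟨(Sum.inl e, i), hq⟩ : SDn s x)]
      · simp only [Fq, D1, star_stdBasisMatrix, Matrix.single_mul_single_same, hCK1]
      · rintro ⟨⟨e' | w', i'⟩, hq'⟩ - hne
        · simp only [Fq, star_stdBasisMatrix]
          by_cases hmid : (⟨(Sum.inr (s e'), i'), hq'⟩ : SUp s x) = ⟨(Sum.inr (s e), i), hq⟩
          · obtain ⟨h1, h2⟩ : s e' = s e ∧ i' = i := by
              have := Subtype.ext_iff.mp hmid
              simpa [Prod.ext_iff] using this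
            subst h2
            have he : e ≠ e' := by
              rintro rfl
              exact hne rfl
            rw [hmid, Matrix.single_mul_single_same, hS_orth e e' he,
              Matrix.single_zero]
          · exact Matrix.single_mul_single_of_ne _ _ _ _
              (mup.injective.ne (Ne.symm hmid)) _
        · simp only [Fq, mul_zero]
      · intro hm
        exact absurd (Finset.mem_univ _) hm
    · simp only [Fq, D1, star_zero, zero_mul, Finset.sum_const_zero]
  have c2 : ∀ (q : SDn s x) (q' : SUp s x),
      star (Fq s x S mup mdn q) * Gq s x S mup mdn q' = 0 := by
    rintro ⟨⟨e | w, i⟩, hq⟩ ⟨⟨e' | w', i'⟩, hq'⟩ <;>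
      simp only [Fq, Gq, star_zero, zero_mul, mul_zero]
    rw [star_stdBasisMatrix]
    exact Matrix.single_mul_single_of_ne _ _ _ _ (mup.injective.ne (by intro h; have := congrArg (fun q => (Subtype.val q).1) h; simp at this)) _
  have c3 : ∀ (q : SUp s x) (q' : SDn s x),
      star (Gq s x S mup mdn q) * Fq s x S mup mdn q' = 0 := by
    rintro ⟨⟨e | w, i⟩, hq⟩ ⟨⟨e' | w', i'⟩, hq'⟩ <;>
      simp only [Fq, Gq, star_zero, zero_mul, mul_zero]
    rw [star_stdBasisMatrix]
    exact Matrix.single_mul_single_of_ne _ _ _ _ (mup.injective.ne (by intro h; have := congrArg (fun q => (Subtype.val q).1) h; simp at this)) _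
  have c4 : ∀ q : SUp s x, ∑ q' : SUp s x,
      star (Gq s x S mup mdn q) * Gq s x S mup mdn q' = D2 s x S mdn q := by
    rintro ⟨⟨e | w, i⟩, hq⟩
    · rw [Finset.sum_eq_single (⟨(Sum.inl e, i), hq⟩ : SUp s x)]
      · simp only [Gq, D2, star_stdBasisMatrix, star_star, Matrix.single_mul_single_same]
      · rintro ⟨⟨e' | w', i'⟩, hq'⟩ - hne
        · simp only [Gq, star_stdBasisMatrix, star_star]
          exact Matrix.single_mul_single_of_ne _ _ _ _ (mup.injective.ne (Ne.symm hne)) _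
        · simp only [Gq, mul_zero]
      · intro hm
        exact absurd (Finset.mem_univ _) hm
    · simp only [Gq, D2, star_zero, zero_mul, Finset.sum_const_zero]
  -- the four pieces of V * (star V * V)
  have d1 : ∀ q : SDn s x, ∑ q' : SDn s x,
      Fq s x S mup mdn q * D1 r s x p mdn q' = Fq s x S mup mdn q := by
    rintro ⟨⟨e | w, i⟩, hq⟩
    · rw [Finset.sum_eq_single (⟨(Sum.inl e, i), hq⟩ : SDn s x)]
      · simp only [Fq, D1, Matrix.single_mul_single_same, hSp]
      · rintro ⟨⟨e' | w', i'⟩, hq'⟩ - hne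
        · simp only [Fq, D1]
          exact Matrix.single_mul_single_of_ne _ _ _ _ (mdn.injective.ne (Ne.symm hne)) _
        · simp only [Fq, D1, mul_zero]
      · intro hm
        exact absurd (Finset.mem_univ _) hm
    · simp only [Fq, zero_mul, Finset.sum_const_zero]
  have d2 : ∀ (q : SDn s x) (q' : SUp s x),
      Fq s x S mup mdn q * D2 s x S mdn q' = 0 := by
    rintro ⟨⟨e | w, i⟩, hq⟩ ⟨⟨e' | w', i'⟩, hq'⟩ <;>
      simp only [Fq, D2, zero_mul, mul_zero]
    exact Matrix.single_mul_single_of_ne _ _ _ _ (mdn.injective.ne (by intro h; have := congrArg (fun q => (Subtype.val q).1) h; simp at this)) _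
  have d3 : ∀ (q : SUp s x) (q' : SDn s x),
      Gq s x S mup mdn q * D1 r s x p mdn q' = 0 := by
    rintro ⟨⟨e | w, i⟩, hq⟩ ⟨⟨e' | w', i'⟩, hq'⟩ <;>
      simp only [Gq, D1, zero_mul, mul_zero]
    exact Matrix.single_mul_single_of_ne _ _ _ _ (mdn.injective.ne (by intro h; have := congrArg (fun q => (Subtype.val q).1) h; simp at this)) _
  have d4 : ∀ q : SUp s x, ∑ q' : SUp s x,
      Gq s x S mup mdn q * D2 s x S mdn q' = Gq s x S mup mdn q := by
    rintro ⟨⟨e | w, i⟩, hq⟩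
    · rw [Finset.sum_eq_single (⟨(Sum.inl e, i), hq⟩ : SUp s x)]
      · simp only [Gq, D2, Matrix.single_mul_single_same]
        congr 1
        rw [← mul_assoc, hCK1, hpS]
      · rintro ⟨⟨e' | w', i'⟩, hq'⟩ - hne
        · simp only [Gq, D2]
          by_cases hmid : (⟨(Sum.inr (s e'), i'), hq'⟩ : SDn s x) = ⟨(Sum.inr (s e), i), hq⟩
          · obtain ⟨h1, h2⟩ : s e' = s e ∧ i' = i := by
              have := Subtype.ext_iff.mp hmid
              simpa [Prod.ext_iff] using this
            subst h2
            have he : e ≠ e' := by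
              rintro rfl
              exact hne rfl
            rw [hmid, Matrix.single_mul_single_same, ← mul_assoc, hS_orth e e' he,
              zero_mul, Matrix.single_zero]
          · exact Matrix.single_mul_single_of_ne _ _ _ _ (mdn.injective.ne (Ne.symm hmid)) _
        · simp only [Gq, D2, mul_zero]
      · intro hm
        exact absurd (Finset.mem_univ _) hm
    · simp only [Gq, zero_mul, Finset.sum_const_zero]
  -- assemble
  have hstarV : star ((∑ q, Fq s x S mup mdn q) + ∑ q, Gq s x S mup mdn q)
      * ((∑ q, Fq s x S mup mdn q) + ∑ q, Gq s x S mup mdn q)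
      = (∑ q, D1 r s x p mdn q) + ∑ q, D2 s x S mdn q := by
    rw [star_add, star_sum, star_sum, add_mul, mul_add, mul_add,
      Finset.sum_mul_sum, Finset.sum_mul_sum, Finset.sum_mul_sum, Finset.sum_mul_sum]
    rw [Finset.sum_congr rfl fun q _ => c1 q,
      show (∑ q : SDn s x, ∑ q' : SUp s x,
          star (Fq s x S mup mdn q) * Gq s x S mup mdn q') = 0 from
        Finset.sum_eq_zero fun q _ => Finset.sum_eq_zero fun q' _ => c2 q q',
      show (∑ q : SUp s x, ∑ q' : SDn s x,
          star (Gq s x S mup mdn q) * Fq s x S mup mdn q') = 0 from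
        Finset.sum_eq_zero fun q _ => Finset.sum_eq_zero fun q' _ => c3 q q',
      Finset.sum_congr rfl fun q _ => c4 q]
    rw [add_zero, zero_add]
  have hfinal : ((∑ q, Fq s x S mup mdn q) + ∑ q, Gq s x S mup mdn q)
      * ((∑ q, D1 r s x p mdn q) + ∑ q, D2 s x S mdn q)
      = (∑ q, Fq s x S mup mdn q) + ∑ q, Gq s x S mup mdn q := by
    rw [add_mul, mul_add, mul_add,
      Finset.sum_mul_sum, Finset.sum_mul_sum, Finset.sum_mul_sum, Finset.sum_mul_sum]
    rw [Finset.sum_congr rfl fun q _ => d1 q,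
      show (∑ q : SDn s x, ∑ q' : SUp s x,
          Fq s x S mup mdn q * D2 s x S mdn q') = 0 from
        Finset.sum_eq_zero fun q _ => Finset.sum_eq_zero fun q' _ => d2 q q',
      show (∑ q : SUp s x, ∑ q' : SDn s x,
          Gq s x S mup mdn q * D1 r s x p mdn q') = 0 from
        Finset.sum_eq_zero fun q _ => Finset.sum_eq_zero fun q' _ => d3 q q',
      Finset.sum_congr rfl fun q _ => d4 q]
    rw [add_zero, zero_add]
  rw [hVeq, mul_assoc, hstarV, hfinal]
end

section
/- With notation as in the context, assume A is unital and that p_w = ∑_{e ∈ s⁻¹(w)} s_e s_e* for every vertex w with x_w ≠ 0 (the relative Cuntz–Krieger relation on the support of x). Then U := V + (1 − P) is a unitary element of M_h(A), i.e. U*U = UU* = 1. -/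
open Matrix in
lemma stdBM_star {n : Type*} [DecidableEq n] {A : Type*} [AddMonoid A] [StarAddMonoid A]
    (i j : n) (a : A) :
    star (Matrix.single i j a) = Matrix.single j i (star a) := by
  ext k l
  simp [Matrix.single, Matrix.star_apply, and_comm]
  aesop

lemma stdBM_sum {n : Type*} [DecidableEq n] {A ι : Type*} [AddCommMonoid A]
    (t : Finset ι) (i j : n) (a : ι → A) :
    Matrix.single i j (∑ e ∈ t, a e) = ∑ e ∈ t, Matrix.single i j (a e) := by
  ext k l
  rw [Matrix.sum_apply]
  simp only [Matrix.single, Matrix.of_apply]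
  split <;> simp

lemma diag_sum {n : ℕ} {A : Type*} [AddCommMonoid A] (d : Fin n → A) :
    ∑ k, Matrix.single k k (d k) = Matrix.diagonal d := by
  ext i j
  rw [Matrix.sum_apply]
  by_cases hij : i = j
  · subst hij; simp [Matrix.single, Matrix.diagonal]
  · simp only [Matrix.single, Matrix.of_apply, Matrix.diagonal_apply_ne _ hij]
    apply Finset.sum_eq_zero
    intro k _
    aesop

lemma stdBM_mul_diagonal {n : Type*} [DecidableEq n] [Fintype n] {A : Type*}
    [NonUnitalNonAssocSemiring A] (i j : n) (a : A) (d : n → A) :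
    Matrix.single i j a * Matrix.diagonal d = Matrix.single i j (a * d j) := by
  ext k l
  rw [Matrix.mul_diagonal]
  simp only [Matrix.single, Matrix.of_apply]
  aesop

lemma diagonal_mul_stdBM {n : Type*} [DecidableEq n] [Fintype n] {A : Type*}
    [NonUnitalNonAssocSemiring A] (i j : n) (a : A) (d : n → A) :
    Matrix.diagonal d * Matrix.single i j a = Matrix.single i j (d i * a) := by
  ext k l
  rw [Matrix.diagonal_mul]
  simp only [Matrix.single, Matrix.of_apply]
  aesop

lemma sum_mul_sum_diag {ι M : Type*} [Fintype ι] [NonUnitalNonAssocSemiring M]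
    (f g : ι → M) (h : ∀ q q', q ≠ q' → f q * g q' = 0) :
    (∑ q, f q) * (∑ q, g q) = ∑ q, f q * g q := by
  rw [Finset.sum_mul_sum]
  refine Finset.sum_congr rfl fun q _ => ?_
  exact Finset.sum_eq_single_of_mem q (Finset.mem_univ q)
    (fun q' _ hne => h q q' (Ne.symm hne))

lemma sum_mul_sum_zero {ι κ M : Type*} [Fintype ι] [Fintype κ] [NonUnitalNonAssocSemiring M]
    (f : ι → M) (g : κ → M) (h : ∀ q q', f q * g q' = 0) :
    (∑ q, f q) * (∑ q, g q) = 0 := by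
  rw [Finset.sum_mul_sum]
  exact Finset.sum_eq_zero fun q _ => Finset.sum_eq_zero fun q' _ => h q q'

lemma fiber_lemma {V E A : Type*} {h : ℕ} [AddCommMonoid A]
    (s : E → V) (S1 S2 : Set ((E ⊕ V) × ℤ)) [Fintype S1] [Fintype S2]
    (m : S2 → Fin h) (c : E → A) (Pf : V → A) (T : V → Finset E)
    (h12 : ∀ e i, ((Sum.inl e, i) ∈ S1 ↔ ((Sum.inr (s e) : E ⊕ V), i) ∈ S2))
    (hT : ∀ w i, ((Sum.inr w : E ⊕ V), i) ∈ S2 → ∀ e, (e ∈ T w ↔ s e = w))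
    (hP : ∀ w i, ((Sum.inr w : E ⊕ V), i) ∈ S2 → Pf w = ∑ e ∈ T w, c e) :
    (∑ q : S1, match q with
      | ⟨(Sum.inl e, i), hq⟩ => Matrix.single (m ⟨(Sum.inr (s e), i), (h12 e i).mp hq⟩)
          (m ⟨(Sum.inr (s e), i), (h12 e i).mp hq⟩) (c e)
      | ⟨(Sum.inr _, _), _⟩ => 0)
    = ∑ q : S2, match q with
      | ⟨(Sum.inr w, _), _⟩ => Matrix.single (m q) (m q) (Pf w)
      | ⟨(Sum.inl _, _), _⟩ => (0 : Matrix (Fin h) (Fin h) A) := by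
  classical
  set F1 : (E ⊕ V) × ℤ → Matrix (Fin h) (Fin h) A := fun a =>
    if ha : a ∈ S1 then
      (match a, ha with
      | (Sum.inl e, i), ha => Matrix.single (m ⟨(Sum.inr (s e), i), (h12 e i).mp ha⟩)
          (m ⟨(Sum.inr (s e), i), (h12 e i).mp ha⟩) (c e)
      | (Sum.inr _, _), _ => 0)
    else 0 with hF1
  set F2 : (E ⊕ V) × ℤ → Matrix (Fin h) (Fin h) A := fun a =>
    if ha : a ∈ S2 then
      (match a, ha with
      | (Sum.inr w, i), ha => Matrix.single (m ⟨(Sum.inr w, i), ha⟩)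
          (m ⟨(Sum.inr w, i), ha⟩) (Pf w)
      | (Sum.inl _, _), _ => 0)
    else 0 with hF2
  have e1 : (∑ q : S1, match q with
      | ⟨(Sum.inl e, i), hq⟩ => Matrix.single (m ⟨(Sum.inr (s e), i), (h12 e i).mp hq⟩)
          (m ⟨(Sum.inr (s e), i), (h12 e i).mp hq⟩) (c e)
      | ⟨(Sum.inr _, _), _⟩ => 0) = ∑ a ∈ S1.toFinset, F1 a := by
    rw [Finset.sum_subtype S1.toFinset (fun a => Set.mem_toFinset) F1]
    refine Finset.sum_congr rfl fun q _ => ?_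
    rcases q with ⟨⟨e | v, i⟩, hq⟩ <;> simp only [hF1, dif_pos hq]
  have e2 : (∑ q : S2, match q with
      | ⟨(Sum.inr w, _), _⟩ => Matrix.single (m q) (m q) (Pf w)
      | ⟨(Sum.inl _, _), _⟩ => (0 : Matrix (Fin h) (Fin h) A)) = ∑ a ∈ S2.toFinset, F2 a := by
    rw [Finset.sum_subtype S2.toFinset (fun a => Set.mem_toFinset) F2]
    refine Finset.sum_congr rfl fun q _ => ?_
    rcases q with ⟨⟨e | v, i⟩, hq⟩ <;> simp only [hF2, dif_pos hq]
  rw [e1, e2]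
  set D' : Finset ((E ⊕ V) × ℤ) := S1.toFinset.filter (fun a => a.1.isLeft) with hD'
  have e3 : ∑ a ∈ S1.toFinset, F1 a = ∑ a ∈ D', F1 a := by
    rw [hD', Finset.sum_filter_of_ne]
    rintro ⟨e | v, i⟩ _ hne
    · rfl
    · exfalso; apply hne
      by_cases hmem : ((Sum.inr v : E ⊕ V), i) ∈ S1
      · simp only [hF1, dif_pos hmem]
      · simp only [hF1, dif_neg hmem]
  rw [e3]
  set φ : (E ⊕ V) × ℤ → (E ⊕ V) × ℤ := fun a => (Sum.inr (Sum.elim s id a.1), a.2) with hφ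
  have hmaps : ∀ a ∈ D', φ a ∈ S2.toFinset := by
    rintro ⟨e | v, i⟩ ha
    · rw [hD', Finset.mem_filter] at ha
      rw [Set.mem_toFinset]
      exact (h12 e i).mp (Set.mem_toFinset.mp ha.1)
    · rw [hD', Finset.mem_filter] at ha
      simp at ha
  rw [← Finset.sum_fiberwise_of_maps_to hmaps F1]
  refine Finset.sum_congr rfl ?_
  rintro ⟨b1 | w, j⟩ hb
  · -- edge element of S2 : F2 = 0, fiber empty
    have : ∀ a ∈ D'.filter (fun a => φ a = (Sum.inl b1, j)), F1 a = 0 := by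
      rintro a ha
      rw [Finset.mem_filter] at ha
      exfalso
      have := ha.2
      simp [hφ] at this
    rw [Finset.sum_eq_zero this]
    have hb2 : ((Sum.inl b1 : E ⊕ V), j) ∈ S2 := Set.mem_toFinset.mp hb
    simp only [hF2, dif_pos hb2]
  · have hb2 : ((Sum.inr w : E ⊕ V), j) ∈ S2 := Set.mem_toFinset.mp hb
    have hfib : D'.filter (fun a => φ a = (Sum.inr w, j))
        = (T w).map ⟨fun e => ((Sum.inl e : E ⊕ V), j), (show Function.Injective _ from by intro a b hab; simpa using hab)⟩ := by
      ext ⟨a1 | v, i⟩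
      · simp only [Finset.mem_filter, Finset.mem_map, Function.Embedding.coeFn_mk, hD',
          Set.mem_toFinset, hφ]
        constructor
        · rintro ⟨⟨hmem, -⟩, heq⟩
          simp only [Sum.elim_inl, Prod.mk.injEq, Sum.inr.injEq] at heq
          exact ⟨a1, (hT w j hb2 a1).mpr heq.1, by rw [heq.2]⟩
        · rintro ⟨e, he, heq⟩
          obtain ⟨rfl, rfl⟩ : e = a1 ∧ j = i := by simpa using heq
          have hse : s e = w := (hT w j hb2 e).mp he
          refine ⟨⟨(h12 e j).mpr ?_, rfl⟩, by simp [hse]⟩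
          rw [hse]; exact hb2
      · simp only [Finset.mem_filter, Finset.mem_map, Function.Embedding.coeFn_mk, hD',
          Set.mem_toFinset, Finset.mem_filter]
        constructor
        · rintro ⟨⟨-, hleft⟩, -⟩; simp at hleft
        · rintro ⟨e, -, heq⟩; simp at heq
    rw [hfib, Finset.sum_map]
    simp only [Function.Embedding.coeFn_mk]
    simp only [hF2, dif_pos hb2]
    rw [hP w j hb2, stdBM_sum]
    refine Finset.sum_congr rfl fun e he => ?_
    have hse : s e = w := (hT w j hb2 e).mp he
    subst hse
    have hmem1 : ((Sum.inl e : E ⊕ V), j) ∈ S1 := (h12 e j).mpr hb2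
    simp only [hF1, dif_pos hmem1]
noncomputable def dfun {V E A : Type*} [AddCommMonoid A] [Star A]
    (s : E → V) (x : V → ℤ) (S : E → A) {h : ℕ}
    [Fintype (SUp s x)] [Fintype (SDn s x)]
    (mup : SUp s x ≃ Fin h) (mdn : SDn s x ≃ Fin h) : SDn s x → Matrix (Fin h) (Fin h) A :=
  fun q => match q with
    | ⟨(Sum.inl e, i), hq⟩ =>
        Matrix.single (mup ⟨(Sum.inr (s e), i), hq⟩) (mdn ⟨(Sum.inl e, i), hq⟩) (S e)
    | ⟨(Sum.inr _, _), _⟩ => 0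

noncomputable def ufun {V E A : Type*} [AddCommMonoid A] [Star A]
    (s : E → V) (x : V → ℤ) (S : E → A) {h : ℕ}
    [Fintype (SUp s x)] [Fintype (SDn s x)]
    (mup : SUp s x ≃ Fin h) (mdn : SDn s x ≃ Fin h) : SUp s x → Matrix (Fin h) (Fin h) A :=
  fun q => match q with
    | ⟨(Sum.inl e, i), hq⟩ =>
        Matrix.single (mup ⟨(Sum.inl e, i), hq⟩) (mdn ⟨(Sum.inr (s e), i), hq⟩) (star (S e))
    | ⟨(Sum.inr _, _), _⟩ => 0

lemma Vmat_eq {V E A : Type*} [AddCommMonoid A] [Star A]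
    (s : E → V) (x : V → ℤ) (S : E → A) {h : ℕ}
    [Fintype (SUp s x)] [Fintype (SDn s x)]
    (mup : SUp s x ≃ Fin h) (mdn : SDn s x ≃ Fin h) :
    Vmat s x S mup mdn = (∑ q, dfun s x S mup mdn q) + (∑ q, ufun s x S mup mdn q) := rfl
theorem stmt13 {V E A : Type*} [Countable V] [Countable E] [CStarAlgebra A]
    (r s : E → V) (p : V → A) (S : E → A)
    (hp_star : ∀ v, star (p v) = p v)
    (hp_idem : ∀ v, p v * p v = p v)
    (hp_orth : ∀ v w, v ≠ w → p v * p w = 0)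
    (hCK1 : ∀ e, star (S e) * S e = p (r e))
    (hS_orth : ∀ e f, e ≠ f → star (S e) * S f = 0)
    (hCK3 : ∀ e, p (s e) * S e = S e)
    (x : V → ℤ) (hsupp : {v | x v ≠ 0}.Finite)
    (hemit : ∀ v, x v ≠ 0 → {e | s e = v}.Finite)
    (hker : ∀ v, ∑ᶠ e ∈ {e | r e = v}, x (s e) = x v)
    {h : ℕ} [Fintype (SUp s x)] [Fintype (SDn s x)]
    (mup : SUp s x ≃ Fin h) (mdn : SDn s x ≃ Fin h)
    (hcomp : ∀ (q : SUp s x) (q' : SDn s x), mup q = mdn q' → rext r q.1.1 = rext r q'.1.1)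
    (hRCK : ∀ w, x w ≠ 0 → p w = ∑ᶠ e ∈ {e | s e = w}, S e * star (S e)) :
    (Vmat s x S mup mdn + (1 - Pmat r s x p mup)) *
        star (Vmat s x S mup mdn + (1 - Pmat r s x p mup)) = 1 ∧
      star (Vmat s x S mup mdn + (1 - Pmat r s x p mup)) *
        (Vmat s x S mup mdn + (1 - Pmat r s x p mup)) = 1 := by
  classical
  -- scalar partial-isometry facts
  have hpe : ∀ e, S e * p (r e) = S e := by
    intro e
    have h0 : star (S e * p (r e) - S e) * (S e * p (r e) - S e) = 0 := by
      have expand : star (S e * p (r e) - S e) * (S e * p (r e) - S e)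
          = p (r e) * (star (S e) * S e) * p (r e) - p (r e) * (star (S e) * S e)
            - (star (S e) * S e * p (r e) - star (S e) * S e) := by
        rw [star_sub, star_mul, hp_star]
        noncomm_ring
      rw [expand, hCK1]
      simp only [hp_idem]
      simp
    have := (CStarRing.star_mul_self_eq_zero_iff _).mp h0
    exact sub_eq_zero.mp this
  have hpe' : ∀ e, p (r e) * star (S e) = star (S e) := by
    intro e
    have := congrArg star (hpe e)
    rwa [star_mul, hp_star] at this
  have hCK3' : ∀ e, star (S e) * p (s e) = star (S e) := by
    intro e
    have := congrArg star (hCK3 e)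
    rwa [star_mul, hp_star] at this
  -- abbreviations
  set df : SDn s x → Matrix (Fin h) (Fin h) A := dfun s x S mup mdn with hdf
  set uf : SUp s x → Matrix (Fin h) (Fin h) A := ufun s x S mup mdn with huf
  set Vm : Matrix (Fin h) (Fin h) A := Vmat s x S mup mdn with hVm
  set Pm : Matrix (Fin h) (Fin h) A := Pmat r s x p mup with hPm
  have hVsplit : Vm = (∑ q, df q) + (∑ q, uf q) := Vmat_eq s x S mup mdn
  have hstarV : star Vm = (∑ q, star (df q)) + (∑ q, star (uf q)) := by
    rw [hVsplit, star_add, star_sum, star_sum]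
  -- diagonal form of Pm
  set dP : Fin h → A := fun k => p (rext r ((mup.symm k : SUp s x)).1.1) with hdP
  have hPdiag : Pm = Matrix.diagonal dP := by
    rw [hPm]
    show (∑ q : SUp s x, Matrix.single (mup q) (mup q) (p (rext r q.1.1)))
        = Matrix.diagonal dP
    rw [← diag_sum dP, ← Equiv.sum_comp mup (fun k => Matrix.single k k (dP k))]
    refine Finset.sum_congr rfl fun q _ => ?_
    simp [hdP]
  have hdP_up : ∀ q : SUp s x, dP (mup q) = p (rext r q.1.1) := by
    intro q; simp [hdP]
  have hdP_dn : ∀ q : SDn s x, dP (mdn q) = p (rext r q.1.1) := by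
    intro q
    exact congrArg p (hcomp (mup.symm (mdn q)) q (by simp))
  have hPstar : star Pm = Pm := by
    rw [hPdiag, Matrix.star_eq_conjTranspose, Matrix.diagonal_conjTranspose]
    exact congrArg Matrix.diagonal (funext fun k => hp_star _)
  have hPP : Pm * Pm = Pm := by
    rw [hPdiag, Matrix.diagonal_mul_diagonal]
    exact congrArg Matrix.diagonal (funext fun k => hp_idem _)
  -- V * P = V and P * V = V
  have hVP : Vm * Pm = Vm := by
    rw [hVsplit, hPdiag, add_mul, Finset.sum_mul, Finset.sum_mul]
    congr 1
    · refine Finset.sum_congr rfl fun q _ => ?_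
      rcases q with ⟨⟨e | v, i⟩, hq⟩
      · rw [hdf]
        show Matrix.single (mup ⟨(Sum.inr (s e), i), hq⟩) (mdn ⟨(Sum.inl e, i), hq⟩) (S e)
            * Matrix.diagonal dP
          = Matrix.single (mup ⟨(Sum.inr (s e), i), hq⟩) (mdn ⟨(Sum.inl e, i), hq⟩) (S e)
        rw [stdBM_mul_diagonal, hdP_dn ⟨(Sum.inl e, i), hq⟩]
        show Matrix.single _ _ (S e * p (r e)) = _
        rw [hpe]
      · show (0 : Matrix (Fin h) (Fin h) A) * Matrix.diagonal dP = 0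
        rw [zero_mul]
    · refine Finset.sum_congr rfl fun q _ => ?_
      rcases q with ⟨⟨e | v, i⟩, hq⟩
      · rw [huf]
        show Matrix.single (mup ⟨(Sum.inl e, i), hq⟩) (mdn ⟨(Sum.inr (s e), i), hq⟩)
              (star (S e)) * Matrix.diagonal dP
          = Matrix.single (mup ⟨(Sum.inl e, i), hq⟩) (mdn ⟨(Sum.inr (s e), i), hq⟩)
              (star (S e))
        rw [stdBM_mul_diagonal, hdP_dn ⟨(Sum.inr (s e), i), hq⟩]
        show Matrix.single _ _ (star (S e) * p (s e)) = _
        rw [hCK3']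
      · show (0 : Matrix (Fin h) (Fin h) A) * Matrix.diagonal dP = 0
        rw [zero_mul]
  have hPV : Pm * Vm = Vm := by
    rw [hVsplit, hPdiag, mul_add, Finset.mul_sum, Finset.mul_sum]
    congr 1
    · refine Finset.sum_congr rfl fun q _ => ?_
      rcases q with ⟨⟨e | v, i⟩, hq⟩
      · rw [hdf]
        show Matrix.diagonal dP *
            Matrix.single (mup ⟨(Sum.inr (s e), i), hq⟩) (mdn ⟨(Sum.inl e, i), hq⟩) (S e)
          = Matrix.single (mup ⟨(Sum.inr (s e), i), hq⟩) (mdn ⟨(Sum.inl e, i), hq⟩) (S e)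
        rw [diagonal_mul_stdBM, hdP_up ⟨(Sum.inr (s e), i), hq⟩]
        show Matrix.single _ _ (p (s e) * S e) = _
        rw [hCK3]
      · show Matrix.diagonal dP * (0 : Matrix (Fin h) (Fin h) A) = 0
        rw [mul_zero]
    · refine Finset.sum_congr rfl fun q _ => ?_
      rcases q with ⟨⟨e | v, i⟩, hq⟩
      · rw [huf]
        show Matrix.diagonal dP *
            Matrix.single (mup ⟨(Sum.inl e, i), hq⟩) (mdn ⟨(Sum.inr (s e), i), hq⟩)
              (star (S e))
          = Matrix.single (mup ⟨(Sum.inl e, i), hq⟩) (mdn ⟨(Sum.inr (s e), i), hq⟩)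
              (star (S e))
        rw [diagonal_mul_stdBM, hdP_up ⟨(Sum.inl e, i), hq⟩]
        show Matrix.single _ _ (p (r e) * star (S e)) = _
        rw [hpe']
      · show Matrix.diagonal dP * (0 : Matrix (Fin h) (Fin h) A) = 0
        rw [mul_zero]
  -- cross terms vanish
  have hDU0 : ∀ (q : SDn s x) (q' : SUp s x), df q * star (uf q') = 0 := by
    rintro ⟨⟨e | v, i⟩, hq⟩ ⟨⟨f | w, j⟩, hq'⟩
    · show Matrix.single (mup ⟨(Sum.inr (s e), i), hq⟩) (mdn ⟨(Sum.inl e, i), hq⟩) (S e)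
          * star (Matrix.single (mup ⟨(Sum.inl f, j), hq'⟩)
              (mdn ⟨(Sum.inr (s f), j), hq'⟩) (star (S f))) = 0
      rw [stdBM_star, star_star]
      exact Matrix.single_mul_single_of_ne _ _ _ _ (fun hcon => Sum.inl_ne_inr (congrArg (fun q : SDn s x => q.1.1) (mdn.injective hcon))) _
    · show Matrix.single (mup ⟨(Sum.inr (s e), i), hq⟩) (mdn ⟨(Sum.inl e, i), hq⟩) (S e)
          * star (0 : Matrix (Fin h) (Fin h) A) = 0
      rw [star_zero, mul_zero]
    · show (0 : Matrix (Fin h) (Fin h) A) * _ = 0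
      rw [zero_mul]
    · show (0 : Matrix (Fin h) (Fin h) A) * _ = 0
      rw [zero_mul]
  have hUD0 : ∀ (q : SUp s x) (q' : SDn s x), uf q * star (df q') = 0 := by
    rintro ⟨⟨e | v, i⟩, hq⟩ ⟨⟨f | w, j⟩, hq'⟩
    · show Matrix.single (mup ⟨(Sum.inl e, i), hq⟩) (mdn ⟨(Sum.inr (s e), i), hq⟩)
            (star (S e))
          * star (Matrix.single (mup ⟨(Sum.inr (s f), j), hq'⟩)
              (mdn ⟨(Sum.inl f, j), hq'⟩) (S f)) = 0
      rw [stdBM_star]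
      exact Matrix.single_mul_single_of_ne _ _ _ _ (fun hcon => Sum.inr_ne_inl (congrArg (fun q : SDn s x => q.1.1) (mdn.injective hcon))) _
    · show Matrix.single (mup ⟨(Sum.inl e, i), hq⟩) (mdn ⟨(Sum.inr (s e), i), hq⟩)
            (star (S e)) * star (0 : Matrix (Fin h) (Fin h) A) = 0
      rw [star_zero, mul_zero]
    · show (0 : Matrix (Fin h) (Fin h) A) * _ = 0
      rw [zero_mul]
    · show (0 : Matrix (Fin h) (Fin h) A) * _ = 0
      rw [zero_mul]
  have hDD0 : ∀ q q' : SDn s x, q ≠ q' → df q * star (df q') = 0 := by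
    rintro ⟨⟨e | v, i⟩, hq⟩ ⟨⟨f | w, j⟩, hq'⟩ hne
    · show Matrix.single (mup ⟨(Sum.inr (s e), i), hq⟩) (mdn ⟨(Sum.inl e, i), hq⟩) (S e)
          * star (Matrix.single (mup ⟨(Sum.inr (s f), j), hq'⟩)
              (mdn ⟨(Sum.inl f, j), hq'⟩) (S f)) = 0
      rw [stdBM_star]
      exact Matrix.single_mul_single_of_ne _ _ _ _ (fun hcon => hne (mdn.injective hcon)) _
    · show _ * star (0 : Matrix (Fin h) (Fin h) A) = 0
      rw [star_zero, mul_zero]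
    · show (0 : Matrix (Fin h) (Fin h) A) * _ = 0
      rw [zero_mul]
    · show (0 : Matrix (Fin h) (Fin h) A) * _ = 0
      rw [zero_mul]
  have hUU0 : ∀ q q' : SUp s x, q ≠ q' → uf q * star (uf q') = 0 := by
    rintro ⟨⟨e | v, i⟩, hq⟩ ⟨⟨f | w, j⟩, hq'⟩ hne
    · show Matrix.single (mup ⟨(Sum.inl e, i), hq⟩) (mdn ⟨(Sum.inr (s e), i), hq⟩)
            (star (S e))
          * star (Matrix.single (mup ⟨(Sum.inl f, j), hq'⟩)
              (mdn ⟨(Sum.inr (s f), j), hq'⟩) (star (S f))) = 0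
      rw [stdBM_star, star_star]
      by_cases hcc : mdn ⟨(Sum.inr (s e), i), hq⟩ = mdn ⟨(Sum.inr (s f), j), hq'⟩
      · have h2 := mdn.injective hcc
        replace h2 : ((Sum.inr (s e), i) : (E ⊕ V) × ℤ) = (Sum.inr (s f), j) := congrArg Subtype.val h2
        simp only [Subtype.mk.injEq, Prod.mk.injEq, Sum.inr.injEq] at h2
        obtain ⟨h3, h4⟩ := h2
        subst h4
        have hef : e ≠ f := by rintro rfl; exact hne rfl
        rw [hcc, Matrix.single_mul_single_same, hS_orth e f hef, Matrix.single_zero]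
      · exact Matrix.single_mul_single_of_ne _ _ _ _ hcc _
    · show _ * star (0 : Matrix (Fin h) (Fin h) A) = 0
      rw [star_zero, mul_zero]
    · show (0 : Matrix (Fin h) (Fin h) A) * _ = 0
      rw [zero_mul]
    · show (0 : Matrix (Fin h) (Fin h) A) * _ = 0
      rw [zero_mul]
  -- diagonal collapses for V V*
  have cD : (∑ q, df q) * (∑ q, star (df q)) = ∑ q : SDn s x, (match q with
      | ⟨(Sum.inl e, i), hq⟩ => Matrix.single (mup ⟨(Sum.inr (s e), i), hq⟩)
          (mup ⟨(Sum.inr (s e), i), hq⟩) (S e * star (S e))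
      | ⟨(Sum.inr _, _), _⟩ => 0) := by
    rw [sum_mul_sum_diag _ _ hDD0]
    refine Finset.sum_congr rfl fun q _ => ?_
    rcases q with ⟨⟨e | v, i⟩, hq⟩
    · show Matrix.single (mup ⟨(Sum.inr (s e), i), hq⟩) (mdn ⟨(Sum.inl e, i), hq⟩) (S e)
          * star (Matrix.single (mup ⟨(Sum.inr (s e), i), hq⟩)
              (mdn ⟨(Sum.inl e, i), hq⟩) (S e)) = _
      rw [stdBM_star, Matrix.single_mul_single_same]
    · show (0 : Matrix (Fin h) (Fin h) A) * star (0 : Matrix (Fin h) (Fin h) A) = 0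
      rw [star_zero, mul_zero]
  have cU : (∑ q, uf q) * (∑ q, star (uf q)) = ∑ q : SUp s x, (match q with
      | ⟨(Sum.inl e, i), hq⟩ => Matrix.single (mup ⟨(Sum.inl e, i), hq⟩)
          (mup ⟨(Sum.inl e, i), hq⟩) (p (r e))
      | ⟨(Sum.inr _, _), _⟩ => 0) := by
    rw [sum_mul_sum_diag _ _ hUU0]
    refine Finset.sum_congr rfl fun q _ => ?_
    rcases q with ⟨⟨e | v, i⟩, hq⟩
    · show Matrix.single (mup ⟨(Sum.inl e, i), hq⟩) (mdn ⟨(Sum.inr (s e), i), hq⟩)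
            (star (S e))
          * star (Matrix.single (mup ⟨(Sum.inl e, i), hq⟩)
              (mdn ⟨(Sum.inr (s e), i), hq⟩) (star (S e))) = _
      rw [stdBM_star, star_star, Matrix.single_mul_single_same, hCK1]
    · show (0 : Matrix (Fin h) (Fin h) A) * star (0 : Matrix (Fin h) (Fin h) A) = 0
      rw [star_zero, mul_zero]
  -- the fiber data
  set T : V → Finset E := fun w => if hw : {e | s e = w}.Finite then hw.toFinset else ∅ with hT
  have hT1 : ∀ w i, ((Sum.inr w : E ⊕ V), i) ∈ SUp s x → ∀ e, (e ∈ T w ↔ s e = w) := by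
    intro w i hmem e
    have hmem' : 1 ≤ i ∧ i ≤ x w := hmem
    have hne : x w ≠ 0 := by omega
    have hfin := hemit w hne
    rw [hT]
    simp only [dif_pos hfin, Set.Finite.mem_toFinset, Set.mem_setOf_eq]
  have hP1 : ∀ w i, ((Sum.inr w : E ⊕ V), i) ∈ SUp s x →
      p w = ∑ e ∈ T w, S e * star (S e) := by
    intro w i hmem
    have hmem' : 1 ≤ i ∧ i ≤ x w := hmem
    have hne : x w ≠ 0 := by omega
    have hfin := hemit w hne
    have hrk := hRCK w hne
    rw [← Set.Finite.coe_toFinset hfin, finsum_mem_coe_finset] at hrk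
    rw [hT]
    simpa only [dif_pos hfin] using hrk
  have hT2 : ∀ w i, ((Sum.inr w : E ⊕ V), i) ∈ SDn s x → ∀ e, (e ∈ T w ↔ s e = w) := by
    intro w i hmem e
    have hmem' : 1 ≤ i ∧ i ≤ -x w := hmem
    have hne : x w ≠ 0 := by omega
    have hfin := hemit w hne
    rw [hT]
    simp only [dif_pos hfin, Set.Finite.mem_toFinset, Set.mem_setOf_eq]
  have hP2 : ∀ w i, ((Sum.inr w : E ⊕ V), i) ∈ SDn s x →
      p w = ∑ e ∈ T w, S e * star (S e) := by
    intro w i hmem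
    have hmem' : 1 ≤ i ∧ i ≤ -x w := hmem
    have hne : x w ≠ 0 := by omega
    have hfin := hemit w hne
    have hrk := hRCK w hne
    rw [← Set.Finite.coe_toFinset hfin, finsum_mem_coe_finset] at hrk
    rw [hT]
    simpa only [dif_pos hfin] using hrk
  have fib1 : (∑ q : SDn s x, (match q with
      | ⟨(Sum.inl e, i), hq⟩ => Matrix.single (mup ⟨(Sum.inr (s e), i), hq⟩)
          (mup ⟨(Sum.inr (s e), i), hq⟩) (S e * star (S e))
      | ⟨(Sum.inr _, _), _⟩ => 0))
      = ∑ q : SUp s x, (match q with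
      | ⟨(Sum.inr w, _), _⟩ => Matrix.single (mup q) (mup q) (p w)
      | ⟨(Sum.inl _, _), _⟩ => 0) := by
    have base := fiber_lemma s (SDn s x) (SUp s x) (⇑mup) (fun e => S e * star (S e)) p T
      (fun e i => Iff.rfl) hT1 hP1
    refine Eq.trans (Eq.trans ?_ base) ?_
    · refine Finset.sum_congr rfl fun q _ => ?_
      rcases q with ⟨⟨e | v, i⟩, hq⟩ <;> rfl
    · refine Finset.sum_congr rfl fun q _ => ?_
      rcases q with ⟨⟨e | v, i⟩, hq⟩ <;> rfl
  have fib2 : (∑ q : SUp s x, (match q with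
      | ⟨(Sum.inl e, i), hq⟩ => Matrix.single (mdn ⟨(Sum.inr (s e), i), hq⟩)
          (mdn ⟨(Sum.inr (s e), i), hq⟩) (S e * star (S e))
      | ⟨(Sum.inr _, _), _⟩ => 0))
      = ∑ q : SDn s x, (match q with
      | ⟨(Sum.inr w, _), _⟩ => Matrix.single (mdn q) (mdn q) (p w)
      | ⟨(Sum.inl _, _), _⟩ => 0) := by
    have base := fiber_lemma s (SUp s x) (SDn s x) (⇑mdn) (fun e => S e * star (S e)) p T
      (fun e i => Iff.rfl) hT2 hP2
    refine Eq.trans (Eq.trans ?_ base) ?_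
    · refine Finset.sum_congr rfl fun q _ => ?_
      rcases q with ⟨⟨e | v, i⟩, hq⟩ <;> rfl
    · refine Finset.sum_congr rfl fun q _ => ?_
      rcases q with ⟨⟨e | v, i⟩, hq⟩ <;> rfl
  -- splitting of Pm
  have hPsplit : Pm = (∑ q : SUp s x, (match q with
      | ⟨(Sum.inl e, i), hq⟩ => Matrix.single (mup ⟨(Sum.inl e, i), hq⟩)
          (mup ⟨(Sum.inl e, i), hq⟩) (p (r e))
      | ⟨(Sum.inr _, _), _⟩ => 0))
      + ∑ q : SUp s x, (match q with
      | ⟨(Sum.inr w, _), _⟩ => Matrix.single (mup q) (mup q) (p w)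
      | ⟨(Sum.inl _, _), _⟩ => 0) := by
    rw [hPm]
    show (∑ q : SUp s x, Matrix.single (mup q) (mup q) (p (rext r q.1.1))) = _
    rw [← Finset.sum_add_distrib]
    refine Finset.sum_congr rfl fun q _ => ?_
    rcases q with ⟨⟨e | v, i⟩, hq⟩
    · exact (add_zero _).symm
    · exact (zero_add _).symm
  have key1 : Vm * star Vm = Pm := by
    have z1 : (∑ q, df q) * (∑ q, star (uf q)) = 0 := sum_mul_sum_zero _ _ hDU0
    have z2 : (∑ q, uf q) * (∑ q, star (df q)) = 0 := sum_mul_sum_zero _ _ hUD0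
    rw [hstarV, hVsplit, add_mul, mul_add, mul_add, cD, cU, z1, z2, add_zero, zero_add,
      fib1, hPsplit]
    exact add_comm _ _
  -- now the symmetric computation for star V * V
  have hsDU0 : ∀ (q : SDn s x) (q' : SUp s x), star (df q) * uf q' = 0 := by
    rintro ⟨⟨e | v, i⟩, hq⟩ ⟨⟨f | w, j⟩, hq'⟩
    · show star (Matrix.single (mup ⟨(Sum.inr (s e), i), hq⟩)
            (mdn ⟨(Sum.inl e, i), hq⟩) (S e))
          * Matrix.single (mup ⟨(Sum.inl f, j), hq'⟩)
              (mdn ⟨(Sum.inr (s f), j), hq'⟩) (star (S f)) = 0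
      rw [stdBM_star]
      exact Matrix.single_mul_single_of_ne _ _ _ _ (fun hcon => Sum.inr_ne_inl (congrArg (fun q : SUp s x => q.1.1) (mup.injective hcon))) _
    · show _ * (0 : Matrix (Fin h) (Fin h) A) = 0
      rw [mul_zero]
    · show star (0 : Matrix (Fin h) (Fin h) A) * _ = 0
      rw [star_zero, zero_mul]
    · show star (0 : Matrix (Fin h) (Fin h) A) * _ = 0
      rw [star_zero, zero_mul]
  have hsUD0 : ∀ (q : SUp s x) (q' : SDn s x), star (uf q) * df q' = 0 := by
    rintro ⟨⟨e | v, i⟩, hq⟩ ⟨⟨f | w, j⟩, hq'⟩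
    · show star (Matrix.single (mup ⟨(Sum.inl e, i), hq⟩)
            (mdn ⟨(Sum.inr (s e), i), hq⟩) (star (S e)))
          * Matrix.single (mup ⟨(Sum.inr (s f), j), hq'⟩)
              (mdn ⟨(Sum.inl f, j), hq'⟩) (S f) = 0
      rw [stdBM_star]
      exact Matrix.single_mul_single_of_ne _ _ _ _ (fun hcon => Sum.inl_ne_inr (congrArg (fun q : SUp s x => q.1.1) (mup.injective hcon))) _
    · show _ * (0 : Matrix (Fin h) (Fin h) A) = 0
      rw [mul_zero]
    · show star (0 : Matrix (Fin h) (Fin h) A) * _ = 0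
      rw [star_zero, zero_mul]
    · show star (0 : Matrix (Fin h) (Fin h) A) * _ = 0
      rw [star_zero, zero_mul]
  have hsDD0 : ∀ q q' : SDn s x, q ≠ q' → star (df q) * df q' = 0 := by
    rintro ⟨⟨e | v, i⟩, hq⟩ ⟨⟨f | w, j⟩, hq'⟩ hne
    · show star (Matrix.single (mup ⟨(Sum.inr (s e), i), hq⟩)
            (mdn ⟨(Sum.inl e, i), hq⟩) (S e))
          * Matrix.single (mup ⟨(Sum.inr (s f), j), hq'⟩)
              (mdn ⟨(Sum.inl f, j), hq'⟩) (S f) = 0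
      rw [stdBM_star]
      by_cases hcc : mup ⟨(Sum.inr (s e), i), hq⟩ = mup ⟨(Sum.inr (s f), j), hq'⟩
      · have h2 := mup.injective hcc
        replace h2 : ((Sum.inr (s e), i) : (E ⊕ V) × ℤ) = (Sum.inr (s f), j) := congrArg Subtype.val h2
        simp only [Subtype.mk.injEq, Prod.mk.injEq, Sum.inr.injEq] at h2
        obtain ⟨h3, h4⟩ := h2
        subst h4
        have hef : e ≠ f := by rintro rfl; exact hne rfl
        rw [hcc, Matrix.single_mul_single_same, hS_orth e f hef, Matrix.single_zero]
      · exact Matrix.single_mul_single_of_ne _ _ _ _ hcc _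
    · show _ * (0 : Matrix (Fin h) (Fin h) A) = 0
      rw [mul_zero]
    · show star (0 : Matrix (Fin h) (Fin h) A) * _ = 0
      rw [star_zero, zero_mul]
    · show star (0 : Matrix (Fin h) (Fin h) A) * _ = 0
      rw [star_zero, zero_mul]
  have hsUU0 : ∀ q q' : SUp s x, q ≠ q' → star (uf q) * uf q' = 0 := by
    rintro ⟨⟨e | v, i⟩, hq⟩ ⟨⟨f | w, j⟩, hq'⟩ hne
    · show star (Matrix.single (mup ⟨(Sum.inl e, i), hq⟩)
            (mdn ⟨(Sum.inr (s e), i), hq⟩) (star (S e)))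
          * Matrix.single (mup ⟨(Sum.inl f, j), hq'⟩)
              (mdn ⟨(Sum.inr (s f), j), hq'⟩) (star (S f)) = 0
      rw [stdBM_star]
      exact Matrix.single_mul_single_of_ne _ _ _ _ (fun hcon => hne (mup.injective hcon)) _
    · show _ * (0 : Matrix (Fin h) (Fin h) A) = 0
      rw [mul_zero]
    · show star (0 : Matrix (Fin h) (Fin h) A) * _ = 0
      rw [star_zero, zero_mul]
    · show star (0 : Matrix (Fin h) (Fin h) A) * _ = 0
      rw [star_zero, zero_mul]
  have csD : (∑ q, star (df q)) * (∑ q, df q) = ∑ q : SDn s x, (match q with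
      | ⟨(Sum.inl e, i), hq⟩ => Matrix.single (mdn ⟨(Sum.inl e, i), hq⟩)
          (mdn ⟨(Sum.inl e, i), hq⟩) (p (r e))
      | ⟨(Sum.inr _, _), _⟩ => 0) := by
    rw [sum_mul_sum_diag _ _ hsDD0]
    refine Finset.sum_congr rfl fun q _ => ?_
    rcases q with ⟨⟨e | v, i⟩, hq⟩
    · show star (Matrix.single (mup ⟨(Sum.inr (s e), i), hq⟩)
            (mdn ⟨(Sum.inl e, i), hq⟩) (S e))
          * Matrix.single (mup ⟨(Sum.inr (s e), i), hq⟩)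
              (mdn ⟨(Sum.inl e, i), hq⟩) (S e) = _
      rw [stdBM_star, Matrix.single_mul_single_same, hCK1]
    · show star (0 : Matrix (Fin h) (Fin h) A) * (0 : Matrix (Fin h) (Fin h) A) = 0
      rw [star_zero, zero_mul]
  have csU : (∑ q, star (uf q)) * (∑ q, uf q) = ∑ q : SUp s x, (match q with
      | ⟨(Sum.inl e, i), hq⟩ => Matrix.single (mdn ⟨(Sum.inr (s e), i), hq⟩)
          (mdn ⟨(Sum.inr (s e), i), hq⟩) (S e * star (S e))
      | ⟨(Sum.inr _, _), _⟩ => 0) := by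
    rw [sum_mul_sum_diag _ _ hsUU0]
    refine Finset.sum_congr rfl fun q _ => ?_
    rcases q with ⟨⟨e | v, i⟩, hq⟩
    · show star (Matrix.single (mup ⟨(Sum.inl e, i), hq⟩)
            (mdn ⟨(Sum.inr (s e), i), hq⟩) (star (S e)))
          * Matrix.single (mup ⟨(Sum.inl e, i), hq⟩)
              (mdn ⟨(Sum.inr (s e), i), hq⟩) (star (S e)) = _
      rw [stdBM_star, star_star, Matrix.single_mul_single_same]
    · show star (0 : Matrix (Fin h) (Fin h) A) * (0 : Matrix (Fin h) (Fin h) A) = 0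
      rw [star_zero, zero_mul]
  have hQsplit : (∑ q : SDn s x, Matrix.single (mdn q) (mdn q) (p (rext r q.1.1)))
      = (∑ q : SDn s x, (match q with
      | ⟨(Sum.inl e, i), hq⟩ => Matrix.single (mdn ⟨(Sum.inl e, i), hq⟩)
          (mdn ⟨(Sum.inl e, i), hq⟩) (p (r e))
      | ⟨(Sum.inr _, _), _⟩ => 0))
      + ∑ q : SDn s x, (match q with
      | ⟨(Sum.inr w, _), _⟩ => Matrix.single (mdn q) (mdn q) (p w)
      | ⟨(Sum.inl _, _), _⟩ => 0) := by
    rw [← Finset.sum_add_distrib]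
    refine Finset.sum_congr rfl fun q _ => ?_
    rcases q with ⟨⟨e | v, i⟩, hq⟩
    · exact (add_zero _).symm
    · exact (zero_add _).symm
  have hQP : (∑ q : SDn s x, Matrix.single (mdn q) (mdn q) (p (rext r q.1.1))) = Pm := by
    rw [hPdiag, ← diag_sum dP, ← Equiv.sum_comp mdn (fun k => Matrix.single k k (dP k))]
    refine Finset.sum_congr rfl fun q _ => ?_
    rw [hdP_dn q]
  have key2 : star Vm * Vm = Pm := by
    have z3 : (∑ q, star (df q)) * (∑ q, uf q) = 0 := sum_mul_sum_zero _ _ hsDU0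
    have z4 : (∑ q, star (uf q)) * (∑ q, df q) = 0 := sum_mul_sum_zero _ _ hsUD0
    rw [hstarV, hVsplit, add_mul, mul_add, mul_add, csD, csU, z3, z4, add_zero, zero_add,
      fib2, ← hQsplit, hQP]
  -- final assembly
  have e3 : (1 - Pm) * (1 - Pm) = 1 - Pm := by
    rw [mul_sub, mul_one, sub_mul, one_mul, hPP, sub_self, sub_zero]
  have hstarU : star (Vm + (1 - Pm)) = star Vm + (1 - Pm) := by
    rw [star_add, star_sub, star_one, hPstar]
  constructor
  · rw [hstarU, add_mul, mul_add, mul_add]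
    have e1 : Vm * (1 - Pm) = 0 := by rw [mul_sub, mul_one, hVP, sub_self]
    have e2 : (1 - Pm) * star Vm = 0 := by
      have hPsV : Pm * star Vm = star Vm := by
        have hh := congrArg star hVP
        rwa [star_mul, hPstar] at hh
      rw [sub_mul, one_mul, hPsV, sub_self]
    rw [key1, e1, e2, e3, add_zero, zero_add]
    abel
  · rw [hstarU, add_mul, mul_add, mul_add]
    have e1 : (1 - Pm) * Vm = 0 := by rw [sub_mul, one_mul, hPV, sub_self]
    have e2 : star Vm * (1 - Pm) = 0 := by
      have hsVP : star Vm * Pm = star Vm := by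
        have hh := congrArg star hPV
        rwa [star_mul, hPstar] at hh
      rw [mul_sub, mul_one, hsVP, sub_self]
    rw [key2, e1, e2, e3, add_zero, zero_add]
    abel
end

section
/- Let H ⊆ E⁰ be hereditary (s(e) ∈ H implies r(e) ∈ H for every e ∈ E¹), and let {p_v, s_e} be a Toeplitz–Cuntz–Krieger E-family in a C*-algebra A which moreover satisfies p_v = ∑_{e ∈ s⁻¹(v)} s_e s_e* for every regular vertex v (a Cuntz–Krieger E-family). Let E∖H denote the subgraph with vertex set E⁰∖H and edge set r⁻¹(E⁰∖H). Let x : E⁰∖H → ℤ be finitely supported, with every vertex w in its support being either a regular vertex of E or an infinite emitter of E with s⁻¹(w) ∩ r⁻¹(E⁰∖H) finite and nonempty (a breaking vertex for H), and suppose x satisfies the kernel condition for the graph E∖H. Let V̂ and P̂ be the elements of M_h(A) obtained by applying the construction of V and P to the graph E∖H and the family {p_v, s_e : v ∈ E⁰∖H, e ∈ r⁻¹(E⁰∖H)}. Then P̂ − V̂V̂* = ∑_{w regular, 1≤i≤x_w} (∑_{e ∈ s⁻¹(w), r(e) ∈ H} s_e s_e*)·E_{m↑(w,i),m↑(w,i)}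 + ∑_{v₀ breaking vertex, 1≤i≤x_{v₀}} p^H_{v₀}·E_{m↑(v₀,i),m↑(v₀,i)}, where p^H_{v₀} := p_{v₀} − ∑_{e ∈ s⁻¹(v₀), r(e) ∉ H} s_e s_e* is the gap projection. -/
section Aux

open Matrix

theorem sbm_star {n A : Type*} [DecidableEq n] [AddMonoid A] [StarAddMonoid A]
    (i j : n) (a : A) :
    star (Matrix.single i j a) = Matrix.single j i (star a) := by
  ext k l
  simp only [Matrix.star_eq_conjTranspose, Matrix.conjTranspose_apply, Matrix.single,
    Matrix.of_apply]
  by_cases h1 : j = k <;> by_cases h2 : i = l <;> simp [h1, h2]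

theorem sbm_sub {n A : Type*} [DecidableEq n] [SubtractionMonoid A]
    (i j : n) (a b : A) :
    Matrix.single i j (a - b) = Matrix.single i j a - Matrix.single i j b := by
  ext k l
  simp only [Matrix.single, Matrix.of_apply, Matrix.sub_apply]
  by_cases h1 : i = k <;> by_cases h2 : j = l <;> simp [h1, h2]

theorem sbm_sum {n A ι : Type*} [DecidableEq n] [AddCommMonoid A]
    (i j : n) (t : Finset ι) (f : ι → A) :
    Matrix.single i j (∑ s ∈ t, f s) = ∑ s ∈ t, Matrix.single i j (f s) := by
  ext k l
  simp only [Matrix.single, Matrix.of_apply, Matrix.sum_apply]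
  by_cases h1 : i = k <;> by_cases h2 : j = l <;> simp [h1, h2]

/-- The summand of the first sum in `Vmat`. -/
noncomputable def fA {V E A : Type*} [AddCommMonoid A] [Star A]
    (s : E → V) (x : V → ℤ) (S : E → A) {h : ℕ}
    [Fintype (SUp s x)] [Fintype (SDn s x)]
    (mup : SUp s x ≃ Fin h) (mdn : SDn s x ≃ Fin h) : SDn s x → Matrix (Fin h) (Fin h) A :=
  fun q => match q with
    | ⟨(Sum.inl e, i), hq⟩ =>
        Matrix.single (mup ⟨(Sum.inr (s e), i), hq⟩) (mdn ⟨(Sum.inl e, i), hq⟩) (S e)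
    | ⟨(Sum.inr _, _), _⟩ => 0

/-- The summand of the second sum in `Vmat`. -/
noncomputable def gA {V E A : Type*} [AddCommMonoid A] [Star A]
    (s : E → V) (x : V → ℤ) (S : E → A) {h : ℕ}
    [Fintype (SUp s x)] [Fintype (SDn s x)]
    (mup : SUp s x ≃ Fin h) (mdn : SDn s x ≃ Fin h) : SUp s x → Matrix (Fin h) (Fin h) A :=
  fun q => match q with
    | ⟨(Sum.inl e, i), hq⟩ =>
        Matrix.single (mup ⟨(Sum.inl e, i), hq⟩) (mdn ⟨(Sum.inr (s e), i), hq⟩) (star (S e))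
    | ⟨(Sum.inr _, _), _⟩ => 0

/-- The diagonal contribution `s_e s_e*` at `m↑(s(e),i)`. -/
noncomputable def Fa {V E A : Type*} [NonUnitalSemiring A] [Star A]
    (s : E → V) (x : V → ℤ) (S : E → A) {h : ℕ}
    [Fintype (SUp s x)]
    (mup : SUp s x ≃ Fin h) : SDn s x → Matrix (Fin h) (Fin h) A :=
  fun q => match q with
    | ⟨(Sum.inl e, i), hq⟩ =>
        Matrix.single (mup ⟨(Sum.inr (s e), i), hq⟩) (mup ⟨(Sum.inr (s e), i), hq⟩)
          (S e * star (S e))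
    | ⟨(Sum.inr _, _), _⟩ => 0

/-- The diagonal contribution `s_e* s_e` at `m↑(e,i)`. -/
noncomputable def Ga {V E A : Type*} [NonUnitalSemiring A] [Star A]
    (s : E → V) (x : V → ℤ) (S : E → A) {h : ℕ}
    [Fintype (SUp s x)]
    (mup : SUp s x ≃ Fin h) : SUp s x → Matrix (Fin h) (Fin h) A :=
  fun q => match q with
    | ⟨(Sum.inl e, i), hq⟩ =>
        Matrix.single (mup ⟨(Sum.inl e, i), hq⟩) (mup ⟨(Sum.inl e, i), hq⟩)
          (star (S e) * S e)
    | ⟨(Sum.inr _, _), _⟩ => 0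

/-- Fiber map `SDn → SUp`, `(e,i) ↦ (s(e),i)` on edges, junk on vertices. -/
noncomputable def Phi {V E : Type*} (s : E → V) (x : V → ℤ) {h : ℕ}
    [Fintype (SUp s x)] [Fintype (SDn s x)]
    (mup : SUp s x ≃ Fin h) (mdn : SDn s x ≃ Fin h) : SDn s x → SUp s x :=
  fun q => match q with
    | ⟨(Sum.inl e, i), hq⟩ => ⟨(Sum.inr (s e), i), hq⟩
    | ⟨(Sum.inr v, i), hq⟩ => mup.symm (mdn ⟨(Sum.inr v, i), hq⟩)

theorem Vmat_mul_star {V E A : Type*} [NonUnitalSemiring A] [StarRing A]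
    (s : E → V) (x : V → ℤ) (S : E → A)
    (hS : ∀ e f : E, e ≠ f → star (S e) * S f = 0) {h : ℕ}
    [Fintype (SUp s x)] [Fintype (SDn s x)]
    (mup : SUp s x ≃ Fin h) (mdn : SDn s x ≃ Fin h) :
    Vmat s x S mup mdn * star (Vmat s x S mup mdn)
      = (∑ q : SDn s x, Fa s x S mup q) + ∑ q : SUp s x, Ga s x S mup q := by
  classical
  have hVdef : Vmat s x S mup mdn
      = (∑ q : SDn s x, fA s x S mup mdn q) + ∑ q : SUp s x, gA s x S mup mdn q := rfl
  have hdn : ∀ (a b : SDn s x), a.1 ≠ b.1 → mdn a ≠ mdn b := fun a b hab hEq =>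
    hab (congrArg Subtype.val (mdn.injective hEq))
  rw [hVdef, star_add, star_sum, star_sum, add_mul, mul_add, mul_add,
    Finset.sum_mul_sum Finset.univ Finset.univ (fun q => fA s x S mup mdn q)
      (fun q' => star (fA s x S mup mdn q')),
    Finset.sum_mul_sum Finset.univ Finset.univ (fun q => fA s x S mup mdn q)
      (fun q' => star (gA s x S mup mdn q')),
    Finset.sum_mul_sum Finset.univ Finset.univ (fun q => gA s x S mup mdn q)
      (fun q' => star (fA s x S mup mdn q')),
    Finset.sum_mul_sum Finset.univ Finset.univ (fun q => gA s x S mup mdn q)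
      (fun q' => star (gA s x S mup mdn q'))]
  have hff : ∀ q : SDn s x, ∑ q' : SDn s x, fA s x S mup mdn q * star (fA s x S mup mdn q')
      = Fa s x S mup q := by
    intro q
    rw [Finset.sum_eq_single_of_mem q (Finset.mem_univ q)]
    · rcases q with ⟨⟨e | v, i⟩, hq⟩
      · simp only [fA, Fa, sbm_star, Matrix.single_mul_single_same]
      · simp [fA, Fa]
    · intro q' _ hne
      rcases q with ⟨⟨e | v, i⟩, hq⟩
      · rcases q' with ⟨⟨f | w, j⟩, hq'⟩
        · simp only [fA, sbm_star]
          exact Matrix.single_mul_single_of_ne _ _ _ _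
            (hdn _ _ (fun hh => hne.symm (Subtype.ext hh))) _
        · simp [fA]
      · simp [fA]
  have hgg : ∀ q : SUp s x, ∑ q' : SUp s x, gA s x S mup mdn q * star (gA s x S mup mdn q')
      = Ga s x S mup q := by
    intro q
    rw [Finset.sum_eq_single_of_mem q (Finset.mem_univ q)]
    · rcases q with ⟨⟨e | v, i⟩, hq⟩
      · simp only [gA, Ga, sbm_star, star_star, Matrix.single_mul_single_same]
      · simp [gA, Ga]
    · intro q' _ hne
      rcases q with ⟨⟨e | v, i⟩, hq⟩
      · rcases q' with ⟨⟨f | w, j⟩, hq'⟩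
        · simp only [gA, sbm_star, star_star]
          by_cases hm : ((Sum.inr (s e), i) : (E ⊕ V) × ℤ) = (Sum.inr (s f), j)
          · have hsij : s e = s f ∧ i = j := by
              simpa using hm
            have hef : e ≠ f := fun hef =>
              hne (Subtype.ext (Prod.ext (congrArg Sum.inl hef.symm) hsij.2.symm))
            have hmm : (⟨(Sum.inr (s e), i), hq⟩ : SDn s x) = ⟨(Sum.inr (s f), j), hq'⟩ :=
              Subtype.ext hm
            rw [hmm, Matrix.single_mul_single_same, hS e f hef,
              Matrix.single_zero]
          · exact Matrix.single_mul_single_of_ne _ _ _ _ (hdn _ _ hm) _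
        · simp [gA]
      · simp [gA]
  have hfg : ∀ (q : SDn s x) (q' : SUp s x),
      fA s x S mup mdn q * star (gA s x S mup mdn q') = 0 := by
    intro q q'
    rcases q with ⟨⟨e | v, i⟩, hq⟩
    · rcases q' with ⟨⟨f | w, j⟩, hq'⟩
      · simp only [fA, gA, sbm_star]
        exact Matrix.single_mul_single_of_ne _ _ _ _ (hdn _ _ (by simp)) _
      · simp [fA, gA]
    · simp [fA]
  have hgf : ∀ (q : SUp s x) (q' : SDn s x),
      gA s x S mup mdn q * star (fA s x S mup mdn q') = 0 := by
    intro q q'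
    rcases q with ⟨⟨e | v, i⟩, hq⟩
    · rcases q' with ⟨⟨f | w, j⟩, hq'⟩
      · simp only [fA, gA, sbm_star]
        exact Matrix.single_mul_single_of_ne _ _ _ _ (hdn _ _ (by simp)) _
      · simp [fA, gA]
    · simp [gA]
  rw [Finset.sum_congr rfl fun q _ => hff q, Finset.sum_congr rfl fun q _ => hgg q]
  rw [Finset.sum_congr rfl fun q (_ : q ∈ Finset.univ) =>
      Finset.sum_eq_zero fun q' _ => hfg q q',
    Finset.sum_congr rfl fun q (_ : q ∈ Finset.univ) =>
      Finset.sum_eq_zero fun q' _ => hgf q q']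
  simp

end Aux

open scoped Classical in
/-- Here `H` is a hereditary subset of vertices, `{p_v, s_e}` is a Cuntz–Krieger `E`-family,
the subgraph `E∖H` has vertices `{v // v ∉ H}`, edges `{e // r e ∉ H}` and range and source
maps `r'` and `s'`, and `x` is supported on vertices which are regular in `E` or breaking
vertices for `H`, satisfying the kernel condition for `E∖H`.  The elements `V̂ = Vmat s' x
(fun e => S e.1) mup mdn` and `P̂ = Pmat r' s' x (fun w => p w.1) mup` are obtained by applying
the construction of `V` and `P` to the graph `E∖H` and the restricted family. -/
theorem stmt17 {V E A : Type*} [Countable V] [Countable E] [NonUnitalCStarAlgebra A]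
    (r s : E → V) (p : V → A) (S : E → A)
    (hp_star : ∀ v, star (p v) = p v)
    (hp_idem : ∀ v, p v * p v = p v)
    (hp_orth : ∀ v w, v ≠ w → p v * p w = 0)
    (hCK1 : ∀ e, star (S e) * S e = p (r e))
    (hS_orth : ∀ e f, e ≠ f → star (S e) * S f = 0)
    (hCK3 : ∀ e, p (s e) * S e = S e)
    (hCK2 : ∀ v, {e | s e = v}.Finite → {e | s e = v}.Nonempty →
      p v = ∑ᶠ e ∈ {e | s e = v}, S e * star (S e))
    (H : Set V) (hH : ∀ e, s e ∈ H → r e ∈ H)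
    (r' s' : {e : E // r e ∉ H} → {v : V // v ∉ H})
    (hr' : ∀ e, (r' e).1 = r e.1) (hs' : ∀ e, (s' e).1 = s e.1)
    (x : {v : V // v ∉ H} → ℤ) (hsupp : {w | x w ≠ 0}.Finite)
    (hvert : ∀ w : {v : V // v ∉ H}, x w ≠ 0 →
      ({e | s e = w.1}.Finite ∧ {e | s e = w.1}.Nonempty) ∨
        ({e | s e = w.1}.Infinite ∧ {e | s e = w.1 ∧ r e ∉ H}.Finite ∧
          {e | s e = w.1 ∧ r e ∉ H}.Nonempty))
    (hker : ∀ v, ∑ᶠ e ∈ {e | r' e = v}, x (s' e) = x v)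
    {h : ℕ} [Fintype (SUp s' x)] [Fintype (SDn s' x)]
    (mup : SUp s' x ≃ Fin h) (mdn : SDn s' x ≃ Fin h)
    (hcomp : ∀ (q : SUp s' x) (q' : SDn s' x),
      mup q = mdn q' → rext r' q.1.1 = rext r' q'.1.1) :
    Pmat r' s' x (fun w => p w.1) mup -
        Vmat s' x (fun e => S e.1) mup mdn * star (Vmat s' x (fun e => S e.1) mup mdn) =
      ∑ q : SUp s' x, Matrix.single (mup q) (mup q)
        (match q.1.1 with
         | Sum.inl _ => (0 : A)
         | Sum.inr w =>
            if {e | s e = w.1}.Finite then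
              ∑ᶠ e ∈ {e | s e = w.1 ∧ r e ∈ H}, S e * star (S e)
            else
              p w.1 - ∑ᶠ e ∈ {e | s e = w.1 ∧ r e ∉ H}, S e * star (S e)) := by
  classical
  set S' : {e : E // r e ∉ H} → A := fun e => S e.1 with hS'def
  have hS'orth : ∀ e f : {e : E // r e ∉ H}, e ≠ f → star (S' e) * S' f = 0 := by
    intro e f hef
    exact hS_orth e.1 f.1 (fun hh => hef (Subtype.ext hh))
  rw [Vmat_mul_star s' x S' hS'orth mup mdn]
  -- Step 3: reindex the Fa sum over SUp
  have step3 : (∑ q : SDn s' x, Fa s' x S' mup q)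
      = ∑ q : SUp s' x, Matrix.single (mup q) (mup q)
          (match q.1.1 with
           | Sum.inl _ => (0 : A)
           | Sum.inr w => ∑ᶠ e ∈ {e | s e = w.1 ∧ r e ∉ H}, S e * star (S e)) := by
    rw [← Finset.sum_filter_of_ne (p := fun q : SDn s' x => q.1.1.isLeft)
      (fun q _ hne => by
        rcases q with ⟨⟨e | v, i⟩, hq⟩
        · rfl
        · simp [Fa] at hne)]
    rw [← Finset.sum_fiberwise_of_maps_to
      (g := Phi s' x mup mdn) (t := Finset.univ) (fun q _ => Finset.mem_univ _)]
    refine Finset.sum_congr rfl fun q' _ => ?_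
    rcases q' with ⟨⟨e' | w, i⟩, hq'⟩
    · -- edge target: fiber is empty of edge elements
      rw [Matrix.single_zero]
      refine Finset.sum_eq_zero fun q hq => ?_
      rcases q with ⟨⟨f | v, j⟩, hqm⟩
      · exfalso
        rw [Finset.mem_filter] at hq
        have := congrArg Subtype.val hq.2
        simp only [Phi] at this
        exact absurd (congrArg Prod.fst this) (by simp)
      · exfalso
        rw [Finset.mem_filter, Finset.mem_filter] at hq
        simpa using hq.1.2
    · -- vertex target
      have hi : 1 ≤ i ∧ i ≤ x w := hq'
      have hxw : x w ≠ 0 := by omega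
      have hfin : {e : E | s e = w.1 ∧ r e ∉ H}.Finite := by
        rcases hvert w hxw with ⟨hf, _⟩ | ⟨_, hf, _⟩
        · exact hf.subset fun e he => he.1
        · exact hf
      dsimp only
      rw [finsum_mem_eq_finite_toFinset_sum _ hfin, sbm_sum]
      refine Finset.sum_bij'
        (i := fun q hq => match q, hq with
          | ⟨(Sum.inl e, j), hqm⟩, _ => e.1
          | ⟨(Sum.inr v, j), hqm⟩, hq => False.elim (by
              rw [Finset.mem_filter, Finset.mem_filter] at hq
              simpa using hq.1.2))
        (j := fun e he => ⟨(Sum.inl ⟨e, (hfin.mem_toFinset.mp he).2⟩, i), by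
          have hs'e : s' ⟨e, (hfin.mem_toFinset.mp he).2⟩ = w :=
            Subtype.ext (by rw [hs']; exact (hfin.mem_toFinset.mp he).1)
          show 1 ≤ i ∧ i ≤ x (s' _)
          rw [hs'e]; exact hi⟩)
        ?_ ?_ ?_ ?_ ?_
      · intro q hq
        rcases q with ⟨⟨f | v, j⟩, hqm⟩
        · rw [hfin.mem_toFinset]
          rw [Finset.mem_filter] at hq
          have := congrArg Subtype.val hq.2
          simp only [Phi] at this
          have h1 : s' f = w := by
            have := congrArg Prod.fst this
            simpa using this
          exact ⟨by rw [← hs' f, h1], f.2⟩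
        · exfalso
          rw [Finset.mem_filter, Finset.mem_filter] at hq
          simpa using hq.1.2
      · intro e he
        rw [Finset.mem_filter, Finset.mem_filter]
        refine ⟨⟨Finset.mem_univ _, rfl⟩, ?_⟩
        show Phi s' x mup mdn _ = _
        have hs'e : s' ⟨e, (hfin.mem_toFinset.mp he).2⟩ = w :=
          Subtype.ext (by rw [hs']; exact (hfin.mem_toFinset.mp he).1)
        simp only [Phi]
        exact Subtype.ext (Prod.ext (congrArg Sum.inr hs'e) rfl)
      · intro q hq
        rcases q with ⟨⟨f | v, j⟩, hqm⟩
        · have hj : j = i := by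
            rw [Finset.mem_filter] at hq
            have := congrArg Subtype.val hq.2
            simp only [Phi] at this
            simpa using (congrArg Prod.snd this)
          exact Subtype.ext (by simp [hj])
        · exfalso
          rw [Finset.mem_filter, Finset.mem_filter] at hq
          simpa using hq.1.2
      · intro e he
        rfl
      · intro q hq
        rcases q with ⟨⟨f | v, j⟩, hqm⟩
        · rw [Finset.mem_filter] at hq
          have hphi := hq.2
          have hphi' : (⟨(Sum.inr (s' f), j), hqm⟩ : SUp s' x) = ⟨(Sum.inr w, i), hq'⟩ := hphi
          simp only [Fa]
          rw [hphi']
        · exfalso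
          rw [Finset.mem_filter, Finset.mem_filter] at hq
          simpa using hq.1.2
  rw [step3]
  unfold Pmat
  rw [← Finset.sum_add_distrib, ← Finset.sum_sub_distrib]
  refine Finset.sum_congr rfl fun q _ => ?_
  rcases q with ⟨⟨e | w, i⟩, hq⟩
  · -- edge case
    have h1 : (fun w => p w.1) (rext r' ((⟨(Sum.inl e, i), hq⟩ : SUp s' x)).1.1) = p (r e.1) := by
      simp only [rext, Sum.elim_inl, hr']
    simp only [Ga, h1, hS'def, hCK1, Matrix.single_zero, add_zero, zero_add, sub_self]
  · -- vertex case
    simp only [Ga, Matrix.single_zero, add_zero, zero_add]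
    rw [← sbm_sub]
    refine congrArg (Matrix.single _ _) ?_
    show p w.1 - _ = _
    by_cases hfin : {e | s e = w.1}.Finite
    · rw [if_pos hfin]
      have hi : 1 ≤ i ∧ i ≤ x w := hq
      have hxw : x w ≠ 0 := by omega
      have hne : {e | s e = w.1}.Nonempty := by
        rcases hvert w hxw with ⟨_, hn⟩ | ⟨hinf, _, _⟩
        · exact hn
        · exact absurd hfin hinf
      have hsplit : {e | s e = w.1}
          = {e | s e = w.1 ∧ r e ∈ H} ∪ {e | s e = w.1 ∧ r e ∉ H} := by
        ext e; by_cases hre : r e ∈ H <;> simp [hre]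
      have hdisj : Disjoint {e | s e = w.1 ∧ r e ∈ H} {e | s e = w.1 ∧ r e ∉ H} := by
        rw [Set.disjoint_left]
        rintro e ⟨_, h2⟩ ⟨_, h3⟩
        exact h3 h2
      have hpw := hCK2 w.1 hfin hne
      rw [hsplit, finsum_mem_union hdisj (hfin.subset fun e he => he.1)
        (hfin.subset fun e he => he.1)] at hpw
      rw [hpw, add_sub_cancel_right]
    · rw [if_neg hfin]
end
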